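/- The polycyclic monoid P₂ on two generators is not left fairly amenable: no finitely-additive probability measure μ on P₂ satisfies μ(sA) = μ(A) whenever left multiplication by s is injective on A. -/

import Mathlib

open Set

/-- A finitely-additive probability measure on a type `S`. -/
def IsFAProb {S : Type*} (μ : Set S → ℝ) : Prop :=
  μ Set.univ = 1 ∧ (∀ A, 0 ≤ μ A) ∧
    ∀ A B : Set S, Disjoint A B → μ (A ∪ B) = μ A + μ B

/-- `μ` is left fairly invariant: `μ (s A) = μ A` whenever left
multiplication by `s` is injective on `A`. -/
def LeftFairlyInv {S : Type*} [Mul S] (μ : Set S → ℝ) : Prop :=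
  ∀ (s : S) (A : Set S), Set.InjOn (fun x => s * x) A →
    μ ((fun x => s * x) '' A) = μ A

/-- `μ` is right fairly invariant. -/
def RightFairlyInv {S : Type*} [Mul S] (μ : Set S → ℝ) : Prop :=
  ∀ (s : S) (A : Set S), Set.InjOn (fun x => x * s) A →
    μ ((fun x => x * s) '' A) = μ A

/-- The polycyclic monoid on two generators: elements are `0` (= `none`) or
canonical forms `x⁻¹y` represented as pairs of words `(x, y)` over a
two-letter alphabet. -/
def P2 : Type := Option (List Bool × List Bool)

/-- Multiplication of canonical forms: `(x⁻¹y)(w⁻¹z)` cancels `y` against `w`. -/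
def P2.pmul (a b : List Bool × List Bool) : P2 :=
  if a.2.length ≥ b.1.length then
    (if b.1 <:+ a.2 then
      some (a.1, a.2.take (a.2.length - b.1.length) ++ b.2) else none)
  else
    (if a.2 <:+ b.1 then
      some (b.1.take (b.1.length - a.2.length) ++ a.1, b.2) else none)

instance : Mul P2 where
  mul a b :=
    match a, b with
    | none, _ => none
    | _, none => none
    | some a, some b => P2.pmul a b

def P2.z : P2 := none
def P2.one : P2 := some ([], [])
def P2.gen (c : Bool) : P2 := some ([c], [])
def P2.elt (x y : List Bool) : P2 := some (x, y)

lemma P2.zero_mul (x : P2) : P2.z * x = P2.z := by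
  match x with
  | none => rfl
  | some _ => rfl

lemma P2.gen_mul (c : Bool) (x y : List Bool) :
    P2.gen c * P2.elt x y = P2.elt (x ++ [c]) y := by
  show P2.pmul ([c], []) (x, y) = some (x ++ [c], y)
  unfold P2.pmul
  cases x with
  | nil => simp; rfl
  | cons h t => simp [List.nil_suffix, List.take_length]; rfl

lemma P2.cases (a : P2) : a = P2.z ∨ ∃ x y, a = P2.elt x y := by
  match a with
  | none => exact Or.inl rfl
  | some (x, y) => exact Or.inr ⟨x, y, rfl⟩

lemma P2.elt_ne_z (x y : List Bool) : P2.elt x y ≠ P2.z := by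
  intro h; exact Option.some_ne_none _ h

lemma P2.elt_inj {x y x' y' : List Bool} (h : P2.elt x y = P2.elt x' y') :
    x = x' ∧ y = y' := by
  have h' : (x, y) = (x', y') := Option.some.inj h
  exact ⟨congrArg Prod.fst h', congrArg Prod.snd h'⟩

lemma P2.gen_injOn (c : Bool) :
    Set.InjOn (fun x => P2.gen c * x) Set.univ := by
  rintro a - b - hab
  simp only at hab
  rcases P2.cases a with ha | ⟨x, y, ha⟩ <;> rcases P2.cases b with hb | ⟨x', y', hb⟩ <;>
    subst ha <;> subst hb
  · rfl
  · rw [show P2.gen c * P2.z = P2.z from rfl, P2.gen_mul] at hab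
    exact absurd hab.symm (P2.elt_ne_z _ _)
  · rw [show P2.gen c * P2.z = P2.z from rfl, P2.gen_mul] at hab
    exact absurd hab (P2.elt_ne_z _ _)
  · rw [P2.gen_mul, P2.gen_mul] at hab
    obtain ⟨h1, h2⟩ := P2.elt_inj hab
    rw [List.append_cancel_right h1, h2]

/-- The polycyclic monoid `P₂` is not left fairly amenable. -/
theorem stmt16 : ¬ ∃ μ : Set P2 → ℝ, IsFAProb μ ∧ LeftFairlyInv μ := by
  rintro ⟨μ, ⟨h1, hpos, hadd⟩, hinv⟩
  have mono : ∀ A B : Set P2, A ⊆ B → μ A ≤ μ B := by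
    intro A B hAB
    have : μ B = μ A + μ (B \ A) := by
      rw [← hadd A (B \ A) disjoint_sdiff_self_right, Set.union_diff_cancel hAB]
    linarith [hpos (B \ A)]
  have hsing : ∀ x : P2, μ {x} = μ {P2.z} := by
    intro x
    have hinj : Set.InjOn (fun y => P2.z * y) {x} :=
      (Set.subsingleton_singleton).injOn _
    have h := hinv P2.z {x} hinj
    rw [Set.image_singleton] at h
    rw [P2.zero_mul x] at h
    exact h.symm
  set c : ℝ := μ {P2.z} with hc
  have h2c : 2 * c ≤ 1 := by
    have hdisj : Disjoint ({P2.z} : Set P2) {P2.one} := by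
      rw [Set.disjoint_singleton_left, Set.mem_singleton_iff]
      exact fun h => Option.some_ne_none _ h.symm
    have he := hadd {P2.z} {P2.one} hdisj
    have hle := mono ({P2.z} ∪ {P2.one}) Set.univ (Set.subset_univ _)
    rw [he, hsing P2.one, h1] at hle
    linarith
  have hcge : 1 ≤ c := by
    set A : Set P2 := (fun x => P2.gen true * x) '' Set.univ with hA
    set B : Set P2 := (fun x => P2.gen false * x) '' Set.univ with hB
    have hμA : μ A = 1 := by
      have h := hinv (P2.gen true) Set.univ (P2.gen_injOn true)
      rw [h1] at h; exact h
    have hμB : μ B = 1 := by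
      have h := hinv (P2.gen false) Set.univ (P2.gen_injOn false)
      rw [h1] at h; exact h
    have hAB : A ∩ B ⊆ {P2.z} := by
      rintro z ⟨⟨a, -, ha⟩, ⟨b, -, hb⟩⟩
      simp only at ha hb
      rcases P2.cases a with ha' | ⟨x, y, ha'⟩
      · subst ha'; rw [show P2.gen true * P2.z = P2.z from rfl] at ha
        exact ha ▸ rfl
      rcases P2.cases b with hb' | ⟨x', y', hb'⟩
      · subst hb'; rw [show P2.gen false * P2.z = P2.z from rfl] at hb
        exact hb ▸ rfl
      exfalso
      subst ha'; subst hb'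
      rw [P2.gen_mul] at ha; rw [P2.gen_mul] at hb
      rw [← ha] at hb
      obtain ⟨h1', -⟩ := P2.elt_inj hb
      have := congrArg List.reverse h1'
      simp at this
    have hd1 : Disjoint A (B \ A) := disjoint_sdiff_self_right
    have hd2 : Disjoint (B \ A) (B ∩ A) := by
      rw [Set.disjoint_left]; rintro z ⟨-, hz⟩ ⟨-, hz'⟩; exact hz hz'
    have e1 : μ (A ∪ B) = μ A + μ (B \ A) := by
      rw [← Set.union_diff_self, hadd A (B \ A) hd1]
    have e2 : μ B = μ (B \ A) + μ (B ∩ A) := by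
      rw [← hadd _ _ hd2, Set.diff_union_inter]
    have e3 : μ (B ∩ A) ≤ c := by
      refine mono _ _ ?_
      rw [Set.inter_comm]; exact hAB
    have e4 : μ (A ∪ B) ≤ 1 := by rw [← h1]; exact mono _ _ (Set.subset_univ _)
    linarith
  linarith
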